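/- Assume (A3′): for k = 1,…,l there are σₖ ∈ Σ_{N_k} with Γᵏⱼ = Γᵏ_{σₖ⁻¹(j)} for all j and σₖ-nondegenerate relative equilibria Zᵏ(t) = e^{±J_{N_k}t/ord(σₖ)} zᵏ of the k-th cluster system; set Zᵏ ≡ 0 and σₖ = id for k > l, σ = (σ₁,…,σ_m), τ = 2π·ord(σ). Then the real vector space of τ-periodic C¹ functions w : ℝ → ℝ^{2N} that solve the decoupled linearized system Γᵏⱼ ẇᵏⱼ = J(∇²Hᵏ_{ℝ²}(Zᵏ(t))wᵏ)ⱼ for all (k,j) and satisfy σ*w(·+2π) = w is exactly the direct sum span{Ż¹,…,Żˡ} ⊕ {â : a ∈ ℝ^{2m}}, where Żᵏ denotes the function (0,…,0,d/dt Zᵏ,0,…,0) with the nonzero block in position k; in particular this solution space has dimension l + 2m. -/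

import Mathlib

noncomputable section

open Real

/-- The plane `ℝ²` with its Euclidean structure. -/
abbrev R2 : Type := EuclideanSpace ℝ (Fin 2)

/-- The standard symplectic matrix `J` (rotation by `-π/2`): `J(x₁,x₂) = (x₂,-x₁)`. -/
def Jrot (x : R2) : R2 := (WithLp.equiv 2 (Fin 2 → ℝ)).symm ![x 1, -(x 0)]

/-- The rotation `e^{θJ}` of the plane. -/
def rotate (θ : ℝ) (x : R2) : R2 :=
  (WithLp.equiv 2 (Fin 2 → ℝ)).symm
    ![Real.cos θ * x 0 + Real.sin θ * x 1, -Real.sin θ * x 0 + Real.cos θ * x 1]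

/-- The generalized Green's function `G(x,y) = -(1/2π) log|x-y| - g(x,y)`. -/
def Gf (g : R2 → R2 → ℝ) (x y : R2) : ℝ := -(1 / (2 * π)) * Real.log ‖x - y‖ - g x y

/-- `z` is a configuration of pairwise distinct points of `Ω`. -/
def Conf {ι : Type*} (Ω : Set R2) (z : ι → R2) : Prop :=
  (∀ i, z i ∈ Ω) ∧ ∀ i i', i ≠ i' → z i ≠ z i'

/-- The `m`-vortex Hamiltonian `𝓗`. -/
def mHam {m : ℕ} (g : R2 → R2 → ℝ) (Γ : Fin m → ℝ) (a : Fin m → R2) : ℝ :=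
  (∑ k, ∑ k', if k ≠ k' then Γ k * Γ k' * Gf g (a k) (a k') else 0)
    - ∑ k, Γ k ^ 2 * g (a k) (a k)

/-- Partial gradient `∇_{zᵢ} f(z) ∈ ℝ²` of a function of several planar variables. -/
def pgrad {ι : Type*} [DecidableEq ι] (f : (ι → R2) → ℝ) (z : ι → R2) (i : ι) : R2 :=
  gradient (fun p => f (Function.update z i p)) (z i)

/-- `i`-th block of the Hessian of `f` at `z` applied to `w`, `(∇²f(z)w)ᵢ ∈ ℝ²`. -/
def hessVec {ι : Type*} [Fintype ι] [DecidableEq ι] (f : (ι → R2) → ℝ) (z w : ι → R2)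
    (i : ι) : R2 :=
  gradient (fun p => fderiv ℝ f (Function.update z i p) w) (z i)

/-- Kernel of the Hessian `∇²f(z)` viewed as a map into the dual space. -/
def hessKer {ι : Type*} [Fintype ι] (f : (ι → R2) → ℝ) (z : ι → R2) :
    Submodule ℝ (ι → R2) :=
  LinearMap.ker (fderiv ℝ (fderiv ℝ f) z : (ι → R2) →ₗ[ℝ] (ι → R2) →L[ℝ] ℝ)

/-- `z : ℝ → (ι → ℝ²)` solves the vortex system `Γᵢ żᵢ = J ∇_{zᵢ} Ham(z)` on `I`. -/
def IsVortexSol {ι : Type*} [Fintype ι] [DecidableEq ι] (Γv : ι → ℝ)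
    (Ham : (ι → R2) → ℝ) (I : Set ℝ) (z : ℝ → ι → R2) : Prop :=
  ∀ t ∈ I, ∀ i, HasDerivAt (fun s => Γv i • z s i) (Jrot (pgrad Ham (z t) i)) t

/-- The whole-plane `n`-vortex Hamiltonian. -/
def planeHam {n : ℕ} (Γk : Fin n → ℝ) (z : Fin n → R2) : ℝ :=
  -(1 / (2 * π)) * ∑ j, ∑ j', if j ≠ j' then Γk j * Γk j' * Real.log ‖z j - z j'‖ else 0

/-- `Z` is a relative equilibrium `Z(t) = e^{±J t/ordσ} z⁰` of the whole-plane system. -/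
def IsRelEq {n : ℕ} (Γk : Fin n → ℝ) (ordσ : ℕ) (Z : ℝ → Fin n → R2) : Prop :=
  (∃ ω : ℝ, (ω = 1 ∨ ω = -1) ∧ ∃ z0 : Fin n → R2,
      (∀ j j', j ≠ j' → z0 j ≠ z0 j') ∧ ∀ t j, Z t j = rotate (ω * t / (ordσ : ℝ)) (z0 j)) ∧
  IsVortexSol Γk (planeHam Γk) Set.univ Z

/-- `w` solves the linearization `Γⱼẇⱼ = J(∇²H_{ℝ²}(Z(t))w)ⱼ` and is `σ`-symmetric. -/
def IsLinSol {n : ℕ} (Γk : Fin n → ℝ) (σ : Equiv.Perm (Fin n)) (Z : ℝ → Fin n → R2)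
    (w : ℝ → Fin n → R2) : Prop :=
  (∀ t j, HasDerivAt (fun s => Γk j • w s j)
      (Jrot (hessVec (planeHam Γk) (Z t) (w t) j)) t) ∧
  ∀ t j, w (t + 2 * π) (σ⁻¹ j) = w t j

/-- `σ`-nondegeneracy of a relative equilibrium: `σ*Z(·+2π) = Z` and the space of
`σ`-symmetric solutions of the linearized equation is exactly 3-dimensional. -/
def SigmaNondeg {n : ℕ} (Γk : Fin n → ℝ) (σ : Equiv.Perm (Fin n)) (Z : ℝ → Fin n → R2) :
    Prop :=
  (∀ t j, Z (t + 2 * π) (σ⁻¹ j) = Z t j) ∧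
  ∃ W : Fin 3 → ℝ → Fin n → R2,
    LinearIndependent ℝ W ∧ (∀ p, IsLinSol Γk σ Z (W p)) ∧
    ∀ w, IsLinSol Γk σ Z w → w ∈ Submodule.span ℝ (Set.range W)

/-- The `N`-vortex Hamiltonian `H` on clustered configurations. -/
def NHam {m : ℕ} {Nk : Fin m → ℕ} (g : R2 → R2 → ℝ)
    (Γc : (k : Fin m) → Fin (Nk k) → ℝ) (z : ((k : Fin m) × Fin (Nk k)) → R2) : ℝ :=
  (∑ i, ∑ i', if i ≠ i' then Γc i.1 i.2 * Γc i'.1 i'.2 * Gf g (z i) (z i') else 0)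
    - ∑ i, Γc i.1 i.2 ^ 2 * g (z i) (z i)

/-- Square of the `H¹_T` distance of two (`C¹`, `T`-periodic) curves. -/
def H1distSq {ι : Type*} [Fintype ι] (T : ℝ) (u v : ℝ → ι → R2) : ℝ :=
  ∫ t in (0:ℝ)..T,
    ((∑ i, ‖u t i - v t i‖ ^ 2) +
      ∑ i, ‖deriv (fun s => u s i) t - deriv (fun s => v s i) t‖ ^ 2)

/-- The function `F` appearing in the rescaled Hamiltonian. -/
def Ffun {m : ℕ} {Nk : Fin m → ℕ} (g : R2 → R2 → ℝ)
    (Γc : (k : Fin m) → Fin (Nk k) → ℝ) (α : Fin m → R2)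
    (z : ((k : Fin m) × Fin (Nk k)) → R2) : ℝ :=
  (∑ i, ∑ i', if i.1 ≠ i'.1 then
      Γc i.1 i.2 * Γc i'.1 i'.2 * Gf g (z i + α i.1) (z i' + α i'.1) else 0)
    - ∑ k, ∑ j, ∑ j', Γc k j * Γc k j' * g (z ⟨k, j⟩ + α k) (z ⟨k, j'⟩ + α k)

/-- The decoupled limit Hamiltonian `H₀(u) = Σₖ Hᵏ_{ℝ²}(uᵏ)`. -/
def H0 {m : ℕ} {Nk : Fin m → ℕ} (Γc : (k : Fin m) → Fin (Nk k) → ℝ)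
    (u : ((k : Fin m) × Fin (Nk k)) → R2) : ℝ :=
  ∑ k, planeHam (Γc k) (fun j => u ⟨k, j⟩)

/-- The rescaled Hamiltonian `H_r(u) = H₀(u) + F(ru) - 𝓗(α)`. -/
def Hr {m : ℕ} {Nk : Fin m → ℕ} (g : R2 → R2 → ℝ) (Γ : Fin m → ℝ)
    (Γc : (k : Fin m) → Fin (Nk k) → ℝ) (α : Fin m → R2) (r : ℝ)
    (u : ((k : Fin m) × Fin (Nk k)) → R2) : ℝ :=
  H0 Γc u + Ffun g Γc α (r • u) - mHam g Γ α

set_option linter.unusedSectionVars false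
set_option linter.unnecessarySeqFocus false
set_option linter.unreachableTactic false
set_option linter.unusedTactic false
lemma Jrot_apply0 (x : R2) : Jrot x 0 = x 1 := rfl
lemma Jrot_apply1 (x : R2) : Jrot x 1 = -(x 0) := rfl

lemma R2ext {x y : R2} (h0 : x 0 = y 0) (h1 : x 1 = y 1) : x = y := by
  ext i; fin_cases i <;> assumption

lemma Jrot_add (x y : R2) : Jrot (x + y) = Jrot x + Jrot y := by
  apply R2ext <;> simp [Jrot_apply0, Jrot_apply1, PiLp.add_apply] <;> ring

lemma Jrot_smul (c : ℝ) (x : R2) : Jrot (c • x) = c • Jrot x := by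
  apply R2ext <;> simp [Jrot_apply0, Jrot_apply1, PiLp.smul_apply, smul_eq_mul] <;> ring

lemma Jrot_Jrot (x : R2) : Jrot (Jrot x) = -x := by
  apply R2ext <;> simp [Jrot_apply0, Jrot_apply1, PiLp.neg_apply]

lemma Jrot_zero : Jrot (0 : R2) = 0 := by
  apply R2ext <;> simp [Jrot_apply0, Jrot_apply1]

lemma Jrot_eq_zero_iff {x : R2} : Jrot x = 0 ↔ x = 0 := by
  constructor
  · intro h; have := congrArg Jrot h; rw [Jrot_Jrot, Jrot_zero] at this
    simpa using congrArg Neg.neg this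
  · rintro rfl; exact Jrot_zero

lemma rotate_eq (θ : ℝ) (x : R2) : rotate θ x = Real.cos θ • x + Real.sin θ • Jrot x := by
  apply R2ext <;>
    simp [rotate, Jrot_apply0, Jrot_apply1, PiLp.add_apply, PiLp.smul_apply, smul_eq_mul] <;> ring

lemma rotate_zero (x : R2) : rotate 0 x = x := by simp [rotate_eq]

lemma rotate_pi (x : R2) : rotate π x = -x := by simp [rotate_eq]

lemma rotate_Jrot (θ : ℝ) (x : R2) : rotate θ (Jrot x) = Jrot (rotate θ x) := by
  rw [rotate_eq, rotate_eq, Jrot_add, Jrot_smul, Jrot_smul, Jrot_Jrot, smul_neg]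

lemma rotate_rotate (θ θ' : ℝ) (x : R2) : rotate θ (rotate θ' x) = rotate (θ + θ') x := by
  simp only [rotate_eq, Jrot_add, Jrot_smul, Jrot_Jrot, smul_add, smul_smul, smul_neg,
    Real.cos_add, Real.sin_add]
  module

lemma rotate_injective (θ : ℝ) : Function.Injective (rotate θ) := by
  intro x y h
  have : rotate (-θ) (rotate θ x) = rotate (-θ) (rotate θ y) := by rw [h]
  rwa [rotate_rotate, rotate_rotate, neg_add_cancel, rotate_zero, rotate_zero] at this

lemma hasDerivAt_rotate (θ : ℝ) (x : R2) :
    HasDerivAt (fun s => rotate s x) (rotate θ (Jrot x)) θ := by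
  have h : HasDerivAt (fun s => Real.cos s • x + Real.sin s • Jrot x)
      ((-Real.sin θ) • x + Real.cos θ • Jrot x) θ :=
    ((Real.hasDerivAt_cos θ).smul_const x).add ((Real.hasDerivAt_sin θ).smul_const (Jrot x))
  have : (fun s => Real.cos s • x + Real.sin s • Jrot x) = fun s => rotate s x := by
    funext s; rw [rotate_eq]
  rw [this] at h
  convert h using 1
  rw [rotate_eq, Jrot_Jrot, smul_neg]
  module

lemma contDiffAt_planeHam {n : ℕ} (Γk : Fin n → ℝ) {z : Fin n → R2}
    (hz : ∀ j j', j ≠ j' → z j ≠ z j') (N : ℕ∞) : ContDiffAt ℝ N (planeHam Γk) z := by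
  have key : ∀ j j' : Fin n, ContDiffAt ℝ N
      (fun z : Fin n → R2 => if j ≠ j' then Γk j * Γk j' * Real.log ‖z j - z j'‖ else 0) z := by
    intro j j'
    by_cases h : j = j'
    · simp only [h, ne_eq, not_true_eq_false, if_false]; exact contDiffAt_const
    · simp only [ne_eq, h, not_false_eq_true, if_true]
      have h1 : ContDiffAt ℝ N (fun z : Fin n → R2 => z j - z j') z :=
        ((ContinuousLinearMap.proj (R := ℝ) (φ := fun _ : Fin n => R2) j).contDiff.sub
          (ContinuousLinearMap.proj j').contDiff).contDiffAt
      have hne : z j - z j' ≠ 0 := sub_ne_zero.2 (hz j j' h)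
      have h2 : ContDiffAt ℝ N (fun z : Fin n → R2 => ‖z j - z j'‖) z := h1.norm ℝ hne
      exact contDiffAt_const.mul (h2.log (norm_ne_zero_iff.2 hne))
  exact contDiffAt_const.mul <| ContDiffAt.sum fun j _ => ContDiffAt.sum fun j' _ => key j j'

lemma planeHam_translate {n : ℕ} (Γk : Fin n → ℝ) (z : Fin n → R2) (c : R2) :
    planeHam Γk (fun j => z j + c) = planeHam Γk z := by
  simp [planeHam, add_sub_add_right_eq_sub]

lemma fderiv_planeHam_const {n : ℕ} (Γk : Fin n → ℝ) (x : Fin n → R2) (c : R2) :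
    fderiv ℝ (planeHam Γk) x (fun _ => c) = 0 := by
  by_cases hd : DifferentiableAt ℝ (planeHam Γk) x
  · have hL : HasDerivAt (fun s : ℝ => (fun j => x j + s • c : Fin n → R2))
        (fun _ => c) 0 := by
      rw [hasDerivAt_pi]
      intro j
      simpa using ((hasDerivAt_id (0:ℝ)).smul_const c).const_add (x j)
    have hx0 : (fun j => x j + (0:ℝ) • c : Fin n → R2) = x := by funext j; simp
    have h2 : HasDerivAt (fun s : ℝ => planeHam Γk (fun j => x j + s • c))
        (fderiv ℝ (planeHam Γk) x (fun _ => c)) 0 := by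
      have hL' : HasDerivAt (fun s : ℝ => (fun j => x j + s • c : Fin n → R2)) (fun _ => c) 0 := hL
      have hbase : HasFDerivAt (planeHam Γk) (fderiv ℝ (planeHam Γk) x)
          ((fun s : ℝ => (fun j => x j + s • c : Fin n → R2)) 0) := by
        simpa [hx0] using hd.hasFDerivAt
      exact hbase.comp_hasDerivAt 0 hL'
    have h3 : (fun s : ℝ => planeHam Γk (fun j => x j + s • c))
        = fun _ => planeHam Γk x := funext fun s => planeHam_translate Γk x (s • c)
    rw [h3] at h2
    exact h2.unique (hasDerivAt_const 0 _)
  · rw [fderiv_zero_of_not_differentiableAt hd]; rfl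

lemma inner_gradient (g : R2 → ℝ) (y v : R2) :
    inner ℝ (gradient g y) v = fderiv ℝ g y v := by
  rw [gradient]
  exact InnerProductSpace.toDual_symm_apply


variable {nn : ℕ}
lemma pgrad_inner (f : (Fin n → R2) → ℝ) (z : Fin n → R2)
    (hd : DifferentiableAt ℝ f z) (j : Fin n) (v : R2) :
    (inner ℝ (pgrad f z j) v : ℝ) = fderiv ℝ f z (Pi.single j v) := by
  rw [pgrad, inner_gradient]
  have hu := hasFDerivAt_update (𝕜 := ℝ) (i := j) z (z j)
  have hz : Function.update z j (z j) = z := Function.update_eq_self j z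
  have hd' : HasFDerivAt f (fderiv ℝ f z) (Function.update z j (z j)) := by
    rw [hz]; exact hd.hasFDerivAt
  have hcomp : HasFDerivAt (fun p => f (Function.update z j p))
      ((fderiv ℝ f z).comp (ContinuousLinearMap.pi (Pi.single j (.id ℝ R2)))) (z j) :=
    hd'.comp (z j) hu
  rw [hcomp.fderiv]
  simp only [ContinuousLinearMap.coe_comp', Function.comp_apply]
  congr 1
  funext i
  by_cases h : i = j
  · subst h; simp
  · simp [Pi.single_eq_of_ne h]

lemma hess_inner (f : (Fin n → R2) → ℝ) (z : Fin n → R2)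
    (h2 : DifferentiableAt ℝ (fderiv ℝ f) z) (w : Fin n → R2) (j : Fin n) (v : R2) :
    (inner ℝ (hessVec f z w j) v : ℝ) = fderiv ℝ (fderiv ℝ f) z (Pi.single j v) w := by
  rw [hessVec, inner_gradient]
  have hu := hasFDerivAt_update (𝕜 := ℝ) (i := j) z (z j)
  have hz : Function.update z j (z j) = z := Function.update_eq_self j z
  have h2' : HasFDerivAt (fderiv ℝ f) (fderiv ℝ (fderiv ℝ f) z) (Function.update z j (z j)) := by
    rw [hz]; exact h2.hasFDerivAt
  have hcomp : HasFDerivAt (fun p => fderiv ℝ f (Function.update z j p))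
      ((fderiv ℝ (fderiv ℝ f) z).comp (ContinuousLinearMap.pi (Pi.single j (.id ℝ R2)))) (z j) :=
    h2'.comp (z j) hu
  have happ : HasFDerivAt (fun p => fderiv ℝ f (Function.update z j p) w)
      ((ContinuousLinearMap.apply ℝ ℝ w).comp
        ((fderiv ℝ (fderiv ℝ f) z).comp (ContinuousLinearMap.pi (Pi.single j (.id ℝ R2)))))
      (z j) := (ContinuousLinearMap.apply ℝ ℝ w).hasFDerivAt.comp (z j) hcomp
  rw [happ.fderiv]
  simp only [ContinuousLinearMap.coe_comp', Function.comp_apply,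
    ContinuousLinearMap.apply_apply]
  congr 2
  funext i
  by_cases h : i = j
  · subst h; simp
  · simp [Pi.single_eq_of_ne h]

lemma snd_fderiv_const_dir (f : (Fin n → R2) → ℝ) (z : Fin n → R2)
    (h2 : DifferentiableAt ℝ (fderiv ℝ f) z)
    (hconst : ∀ (x : Fin n → R2) (c : R2), fderiv ℝ f x (fun _ => c) = 0)
    (X : Fin n → R2) (c : R2) :
    fderiv ℝ (fderiv ℝ f) z X (fun _ => c) = 0 := by
  have happ : HasFDerivAt (fun x => fderiv ℝ f x (fun _ => c : Fin n → R2))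
      ((ContinuousLinearMap.apply ℝ ℝ (fun _ => c : Fin n → R2)).comp
        (fderiv ℝ (fderiv ℝ f) z)) z := by
    have := (ContinuousLinearMap.apply ℝ ℝ (fun _ => c : Fin n → R2)).hasFDerivAt.comp z
      h2.hasFDerivAt
    exact this
  have hzero : (fun x => fderiv ℝ f x (fun _ => c : Fin n → R2)) = fun _ => (0:ℝ) := by
    funext x; exact hconst x c
  rw [hzero] at happ
  have := happ.unique (hasFDerivAt_const 0 z)
  have h0 := congrFun (congrArg (fun (L : (Fin n → R2) →L[ℝ] ℝ) => (L : (Fin n → R2) → ℝ)) this) X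
  simpa using h0

lemma Jrot_injective : Function.Injective Jrot := by
  intro a b h
  have := congrArg Jrot h
  rw [Jrot_Jrot, Jrot_Jrot] at this
  exact neg_injective this

def JrotL : R2 →L[ℝ] R2 :=
  LinearMap.toContinuousLinearMap
    { toFun := Jrot, map_add' := Jrot_add, map_smul' := Jrot_smul }

lemma JrotL_apply (x : R2) : JrotL x = Jrot x := rfl

lemma HasDerivAt.jrot {f : ℝ → R2} {f' : R2} {t : ℝ} (hf : HasDerivAt f f' t) :
    HasDerivAt (fun s => Jrot (f s)) (Jrot f') t := by
  have := JrotL.hasFDerivAt.comp_hasDerivAt t hf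
  exact this

section RelEq

variable {n : ℕ} (Γk : Fin n → ℝ) (o : ℕ) (ω : ℝ) (z0 : Fin n → R2) (Z : ℝ → Fin n → R2)

/-- the velocity field of the relative equilibrium -/
def Vfield (t : ℝ) (j : Fin n) : R2 := (ω / (o : ℝ)) • Jrot (Z t j)

variable (ho : 0 < o) (hω : ω = 1 ∨ ω = -1)
  (hz0 : ∀ j j', j ≠ j' → z0 j ≠ z0 j')
  (hZ : ∀ t j, Z t j = rotate (ω * t / (o : ℝ)) (z0 j))
  (hsol : IsVortexSol Γk (planeHam Γk) Set.univ Z)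
  (hΓ : ∀ j, Γk j ≠ 0)

include hz0 hZ in
lemma Z_distinct (t : ℝ) : ∀ j j', j ≠ j' → Z t j ≠ Z t j' := by
  intro j j' hjj h
  rw [hZ, hZ] at h
  exact hz0 j j' hjj (rotate_injective _ h)

include hZ in
lemma hasDerivAt_Z (t : ℝ) (j : Fin n) :
    HasDerivAt (fun s => Z s j) (Vfield o ω Z t j) t := by
  have hθ : HasDerivAt (fun s : ℝ => ω * s / (o : ℝ)) (ω / (o : ℝ)) t := by
    have : (fun s : ℝ => ω * s / (o : ℝ)) = fun s => (ω / (o : ℝ)) * s := by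
      funext s; ring
    rw [this]
    simpa using (hasDerivAt_id t).const_mul (ω / (o : ℝ))
  have hrot := hasDerivAt_rotate (ω * t / (o : ℝ)) (z0 j)
  have hc : HasDerivAt (fun s => rotate (ω * s / (o : ℝ)) (z0 j))
      ((ω / (o : ℝ)) • rotate (ω * t / (o : ℝ)) (Jrot (z0 j))) t :=
    by have := HasDerivAt.scomp t hrot hθ; exact this
  have heq : (fun s => rotate (ω * s / (o : ℝ)) (z0 j)) = fun s => Z s j := by
    funext s; rw [hZ]
  rw [heq] at hc
  have : (ω / (o : ℝ)) • rotate (ω * t / (o : ℝ)) (Jrot (z0 j)) = Vfield o ω Z t j := by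
    rw [Vfield, rotate_Jrot, ← hZ]
  rwa [this] at hc

include hz0 hZ hsol in
lemma pgrad_Z (t : ℝ) (j : Fin n) :
    pgrad (planeHam Γk) (Z t) j = (Γk j * ω / (o : ℝ)) • Z t j := by
  have h1 := hsol t (Set.mem_univ t) j
  have h2 : HasDerivAt (fun s => Γk j • Z s j) (Γk j • Vfield o ω Z t j) t :=
    (hasDerivAt_Z o ω z0 Z hZ t j).const_smul (Γk j)
  have h3 : Jrot (pgrad (planeHam Γk) (Z t) j) = Γk j • Vfield o ω Z t j := h1.unique h2
  apply Jrot_injective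
  rw [h3, Vfield, smul_smul, ← Jrot_smul, mul_div_assoc]

include hz0 hZ hsol in
lemma fderiv_planeHam_single (t : ℝ) (j : Fin n) (v : R2) :
    fderiv ℝ (planeHam Γk) (Z t) (Pi.single j v)
      = (Γk j * ω / (o : ℝ)) * inner ℝ (Z t j) v := by
  have hd : DifferentiableAt ℝ (planeHam Γk) (Z t) :=
    (contDiffAt_planeHam Γk (Z_distinct o ω z0 Z hz0 hZ t) 2).differentiableAt (by norm_cast)
  rw [← pgrad_inner _ _ hd, pgrad_Z Γk o ω z0 Z hz0 hZ hsol, real_inner_smul_left]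

include ho hz0 hZ hsol in
lemma snd_fderiv_V (t : ℝ) (j : Fin n) (v : R2) :
    fderiv ℝ (fderiv ℝ (planeHam Γk)) (Z t) (fun j' => Vfield o ω Z t j') (Pi.single j v)
      = (Γk j * ω / (o : ℝ)) * inner ℝ (Vfield o ω Z t j) v := by
  have hD2 : DifferentiableAt ℝ (fderiv ℝ (planeHam Γk)) (Z t) := by
    have h := (contDiffAt_planeHam Γk (Z_distinct o ω z0 Z hz0 hZ t) 2).fderiv_right
      (m := 1) (by norm_cast)
    exact h.differentiableAt (by norm_cast)
  have hZpi : HasDerivAt (fun s => Z s) (fun j' => Vfield o ω Z t j') t :=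
    hasDerivAt_pi.2 (fun j' => hasDerivAt_Z o ω z0 Z hZ t j')
  have h1 : HasDerivAt (fun s => fderiv ℝ (planeHam Γk) (Z s))
      (fderiv ℝ (fderiv ℝ (planeHam Γk)) (Z t) (fun j' => Vfield o ω Z t j')) t :=
    hD2.hasFDerivAt.comp_hasDerivAt t hZpi
  have h2 : HasDerivAt (fun s => fderiv ℝ (planeHam Γk) (Z s) (Pi.single j v))
      (fderiv ℝ (fderiv ℝ (planeHam Γk)) (Z t) (fun j' => Vfield o ω Z t j') (Pi.single j v))
      t := by
    have := (ContinuousLinearMap.apply ℝ ℝ (Pi.single j v)).hasFDerivAt.comp_hasDerivAt t h1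
    exact this
  have heq : (fun s => fderiv ℝ (planeHam Γk) (Z s) (Pi.single j v))
      = fun s => (Γk j * ω / (o : ℝ)) * inner ℝ (Z s j) v := by
    funext s; exact fderiv_planeHam_single Γk o ω z0 Z hz0 hZ hsol s j v
  rw [heq] at h2
  have h3 : HasDerivAt (fun s => (Γk j * ω / (o : ℝ)) * (inner ℝ (Z s j) v : ℝ))
      ((Γk j * ω / (o : ℝ)) * inner ℝ (Vfield o ω Z t j) v) t := by
    have hi : HasDerivAt (fun s => (inner ℝ (Z s j) v : ℝ)) (inner ℝ (Vfield o ω Z t j) v) t := by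
      have := (hasDerivAt_Z o ω z0 Z hZ t j).inner ℝ (hasDerivAt_const t v)
      simpa using this
    exact hi.const_mul _
  exact h2.unique h3

include ho hω hz0 hZ hsol in
lemma hessVec_formula (t : ℝ) (j : Fin n) (c : ℝ) (a : R2) :
    hessVec (planeHam Γk) (Z t) (fun j' => c • Vfield o ω Z t j' + a) j
      = (c * Γk j / (o : ℝ) ^ 2) • Jrot (Z t j) := by
  have hC2 := contDiffAt_planeHam Γk (Z_distinct o ω z0 Z hz0 hZ t) 2
  have hD2 : DifferentiableAt ℝ (fderiv ℝ (planeHam Γk)) (Z t) :=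
    (hC2.fderiv_right (m := 1) (by norm_cast)).differentiableAt (by norm_cast)
  have hsym : IsSymmSndFDerivAt ℝ (planeHam Γk) (Z t) :=
    hC2.isSymmSndFDerivAt (by simp)
  apply ext_inner_right ℝ
  intro v
  rw [hess_inner _ _ hD2]
  have hw : (fun j' => c • Vfield o ω Z t j' + a)
      = (c • (fun j' => Vfield o ω Z t j') + (fun _ => a) : Fin n → R2) := rfl
  rw [hw, map_add, map_smul]
  have h0 : fderiv ℝ (fderiv ℝ (planeHam Γk)) (Z t) (Pi.single j v) (fun _ => a) = 0 :=
    snd_fderiv_const_dir _ _ hD2 (fderiv_planeHam_const Γk) _ a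
  have h1 : fderiv ℝ (fderiv ℝ (planeHam Γk)) (Z t) (Pi.single j v)
      (fun j' => Vfield o ω Z t j')
      = (Γk j * ω / (o : ℝ)) * inner ℝ (Vfield o ω Z t j) v := by
    rw [hsym.eq]
    exact snd_fderiv_V Γk o ω z0 Z ho hz0 hZ hsol t j v
  rw [h0, h1]
  have hV : (inner ℝ (Vfield o ω Z t j) v : ℝ) = (ω / (o : ℝ)) * inner ℝ (Jrot (Z t j)) v := by
    rw [Vfield, real_inner_smul_left]
  rw [real_inner_smul_left, hV]
  have ho' : (o : ℝ) ≠ 0 := Nat.cast_ne_zero.2 ho.ne'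
  rcases hω with h | h <;> subst h <;> field_simp <;> ring_nf <;> field_simp

include ho hω hz0 hZ hsol in
lemma hessVec_const (t : ℝ) (j : Fin n) (a : R2) :
    hessVec (planeHam Γk) (Z t) (fun _ => a) j = 0 := by
  have h := hessVec_formula Γk o ω z0 Z ho hω hz0 hZ hsol t j 0 a
  have heq : (fun _ => a) = (fun j' => (0:ℝ) • Vfield o ω Z t j' + a : Fin n → R2) := by
    funext j'; simp
  rw [heq, h]
  simp

include ho hω hz0 hZ hsol in
lemma linsol_deriv (t : ℝ) (j : Fin n) (c : ℝ) (a : R2) :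
    HasDerivAt (fun s => Γk j • (c • Vfield o ω Z s j + a))
      (Jrot (hessVec (planeHam Γk) (Z t) (fun j' => c • Vfield o ω Z t j' + a) j)) t := by
  rw [hessVec_formula Γk o ω z0 Z ho hω hz0 hZ hsol t j c a]
  have hV : HasDerivAt (fun s => Vfield o ω Z s j)
      ((ω / (o : ℝ)) • Jrot (Vfield o ω Z t j)) t := by
    have := ((hasDerivAt_Z o ω z0 Z hZ t j).jrot).const_smul (ω / (o : ℝ))
    exact this
  have h := ((hV.const_smul c).add_const a).const_smul (Γk j)
  have h' : HasDerivAt (fun s => Γk j • (c • Vfield o ω Z s j + a))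
    (Γk j • c • (ω / (o : ℝ)) • Jrot (Vfield o ω Z t j)) t := h
  convert h' using 1
  rcases hω with hw | hw <;> subst hw <;>
    simp only [Vfield, Jrot_smul, Jrot_Jrot, smul_smul, smul_neg, smul_add, add_zero,
      smul_zero] <;> module

end RelEq



lemma deriv_shift_eq (f g : ℝ → R2) (c t : ℝ) (h : ∀ s, g (s + c) = f s) :
    deriv g (t + c) = deriv f t := by
  rw [← deriv_comp_add_const g c t]
  congr 1
  funext s
  exact h s

lemma planeHam_subsingleton {n : ℕ} [Subsingleton (Fin n)] (Γk : Fin n → ℝ) :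
    planeHam Γk = fun _ => 0 := by
  funext z
  rw [planeHam, Finset.sum_eq_zero, mul_zero]
  intro j _
  rw [Finset.sum_eq_zero]
  intro j' _
  simp [Subsingleton.elim j j']

lemma hessVec_planeHam_subsingleton {n : ℕ} [Subsingleton (Fin n)] (Γk : Fin n → ℝ)
    (z w : Fin n → R2) (i : Fin n) : hessVec (planeHam Γk) z w i = 0 := by
  rw [hessVec, planeHam_subsingleton Γk]
  have : (fun p => fderiv ℝ (fun _ : Fin n → R2 => (0:ℝ)) (Function.update z i p) w)
      = fun _ : R2 => (0:ℝ) := by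
    funext p
    rw [fderiv_fun_const]
    simp
  rw [this, gradient_fun_const]

lemma Z_shift_iter {n : ℕ} (σk : Equiv.Perm (Fin n)) (Z : ℝ → Fin n → R2)
    (hsym : ∀ t j, Z (t + 2*π) (σk⁻¹ j) = Z t j) :
    ∀ (M : ℕ) (t : ℝ) (j : Fin n), Z (t + 2*π*(M:ℝ)) ((σk ^ M)⁻¹ j) = Z t j := by
  intro M
  induction M with
  | zero => intro t j; simp
  | succ M ih =>
    intro t j
    have ht : t + 2*π*((M+1 : ℕ):ℝ) = (t + 2*π*(M:ℝ)) + 2*π := by push_cast; ring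
    have hp : ((σk ^ (M+1))⁻¹ : Equiv.Perm (Fin n)) j = σk⁻¹ ((σk ^ M)⁻¹ j) := by
      simp [pow_succ, mul_inv_rev, Equiv.Perm.mul_apply]
    rw [ht, hp, hsym, ih]

lemma exists_z0_ne_zero {n : ℕ} (hn : 2 ≤ n) (z0 : Fin n → R2)
    (hz0 : ∀ j j', j ≠ j' → z0 j ≠ z0 j') : ∃ j, z0 j ≠ 0 := by
  have h0 : (⟨0, by omega⟩ : Fin n) ≠ ⟨1, by omega⟩ := by simp [Fin.ext_iff]
  by_contra h
  push_neg at h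
  exact hz0 _ _ h0 (by rw [h, h])

/-- basis vectors of the plane -/
def e2v : Fin 2 → R2 := fun r => EuclideanSpace.single r 1

lemma R2_decomp (a : R2) : a = a 0 • e2v 0 + a 1 • e2v 1 := by
  apply R2ext <;>
    simp [e2v, EuclideanSpace.single_apply, PiLp.add_apply, PiLp.smul_apply]


section Block

open Submodule Set Module

variable {n : ℕ} (Γk : Fin n → ℝ) (σk : Equiv.Perm (Fin n)) (o : ℕ) (ω : ℝ)
  (z0 : Fin n → R2) (Z : ℝ → Fin n → R2)
  (ho : 0 < o) (hω : ω = 1 ∨ ω = -1)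
  (hz0 : ∀ j j', j ≠ j' → z0 j ≠ z0 j')
  (hZeq : ∀ t j, Z t j = rotate (ω * t / (o : ℝ)) (z0 j))
  (hsol : IsVortexSol Γk (planeHam Γk) Set.univ Z)
  (hshift : ∀ t j, Z (t + 2 * π) (σk⁻¹ j) = Z t j)

include hZeq in
lemma deriv_Z_eq (t : ℝ) (j : Fin n) :
    deriv (fun s => Z s j) t = Vfield o ω Z t j :=
  (hasDerivAt_Z o ω z0 Z hZeq t j).deriv

include ho hω hz0 hZeq hsol hshift in
lemma block_linsol (c : ℝ) (a : R2) :
    IsLinSol Γk σk Z (fun t j => c • deriv (fun s => Z s j) t + a) := by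
  constructor
  · intro t j
    beta_reduce
    have h := linsol_deriv Γk o ω z0 Z ho hω hz0 hZeq hsol t j c a
    have e1 : (fun s => Γk j • (c • deriv (fun u => Z u j) s + a))
        = fun s => Γk j • (c • Vfield o ω Z s j + a) := by
      funext s; rw [deriv_Z_eq o ω z0 Z hZeq]
    have e2 : (fun j' => c • deriv (fun u => Z u j') t + a)
        = fun j' => c • Vfield o ω Z t j' + a := by
      funext j'; rw [deriv_Z_eq o ω z0 Z hZeq]
    rw [e1, e2]
    exact h
  · intro t j
    beta_reduce
    have hd := deriv_shift_eq (fun s => Z s j) (fun s => Z s (σk⁻¹ j)) (2*π) t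
      (fun s => hshift s j)
    rw [hd]

include hshift in
lemma deriv_Z_periodic (M : ℕ) (hM : σk ^ M = 1) (t : ℝ) (j : Fin n) :
    deriv (fun s => Z s j) (t + 2*π*(M:ℝ)) = deriv (fun s => Z s j) t := by
  apply deriv_shift_eq
  intro s
  have h := Z_shift_iter σk Z hshift M s j
  rwa [hM, inv_one, Equiv.Perm.one_apply] at h

include ho hω hz0 hZeq hsol hshift in
lemma block_backward (hn : 2 ≤ n)
    (W : Fin 3 → ℝ → Fin n → R2) (hWli : LinearIndependent ℝ W)
    (hWspan : ∀ w, IsLinSol Γk σk Z w → w ∈ Submodule.span ℝ (Set.range W))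
    (u : ℝ → Fin n → R2) (hu : IsLinSol Γk σk Z u) :
    ∃ (ck : ℝ) (ak : R2), ∀ t j, u t j = ck • deriv (fun s => Z s j) t + ak := by
  classical
  set D : ℝ → Fin n → R2 := fun t j => deriv (fun s => Z s j) t with hD
  set T : Fin 3 → ℝ → Fin n → R2 := ![D, fun _ _ => e2v 0, fun _ _ => e2v 1] with hT
  have hTsol : ∀ p, IsLinSol Γk σk Z (T p) := by
    intro p
    fin_cases p
    · have h := block_linsol Γk σk o ω z0 Z ho hω hz0 hZeq hsol hshift 1 0
      have : (fun t j => (1:ℝ) • deriv (fun s => Z s j) t + (0:R2)) = D := by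
        funext t j; simp [hD]
      rwa [this] at h
    · have h := block_linsol Γk σk o ω z0 Z ho hω hz0 hZeq hsol hshift 0 (e2v 0)
      have : (fun t j => (0:ℝ) • deriv (fun s => Z s j) t + e2v 0)
          = (fun _ _ => e2v 0 : ℝ → Fin n → R2) := by
        funext t j; simp
      rwa [this] at h
    · have h := block_linsol Γk σk o ω z0 Z ho hω hz0 hZeq hsol hshift 0 (e2v 1)
      have : (fun t j => (0:ℝ) • deriv (fun s => Z s j) t + e2v 1)
          = (fun _ _ => e2v 1 : ℝ → Fin n → R2) := by
        funext t j; simp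
      rwa [this] at h
  obtain ⟨js, hjs⟩ := exists_z0_ne_zero hn z0 hz0
  have ho' : (o:ℝ) ≠ 0 := Nat.cast_ne_zero.2 ho.ne'
  have hω0 : ω ≠ 0 := by rcases hω with h | h <;> rw [h] <;> norm_num
  set q : R2 := (ω/(o:ℝ)) • Jrot (z0 js) with hqdef
  have hq : q ≠ 0 := by
    apply smul_ne_zero (div_ne_zero hω0 ho')
    intro h
    exact hjs (Jrot_eq_zero_iff.1 h)
  have hDval : ∀ t j, D t j = (ω/(o:ℝ)) • Jrot (Z t j) := by
    intro t j
    show deriv (fun s => Z s j) t = _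
    rw [deriv_Z_eq o ω z0 Z hZeq]
    rfl
  have hZ0 : Z 0 js = z0 js := by
    rw [hZeq]
    norm_num [rotate_zero]
  have hZt1 : Z (ω * (o:ℝ) * π) js = -(z0 js) := by
    rw [hZeq]
    have harg : ω * (ω * (o:ℝ) * π) / (o:ℝ) = π := by
      rcases hω with h | h <;> rw [h] <;> field_simp
    rw [harg, rotate_pi]
  have hJneg : Jrot (-(z0 js)) = -(Jrot (z0 js)) := by
    have h := Jrot_smul (-1) (z0 js)
    simpa using h
  have hD0 : D 0 js = q := by rw [hDval, hZ0, hqdef]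
  have hD1 : D (ω * (o:ℝ) * π) js = -q := by
    rw [hDval, hZt1, hJneg, hqdef, smul_neg]
  have hTli : LinearIndependent ℝ T := by
    rw [Fintype.linearIndependent_iff]
    intro g hg
    have hval : ∀ t : ℝ, g 0 • D t js + (g 1 • e2v 0 + g 2 • e2v 1) = 0 := by
      intro t
      have h := congrFun (congrFun hg t) js
      simp only [Fin.sum_univ_three, hT, Matrix.cons_val_zero, Matrix.cons_val_one,
        Matrix.head_cons, Matrix.cons_val_two, Matrix.tail_cons] at h
      simp only [Pi.add_apply, Pi.smul_apply, Pi.zero_apply] at h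
      rw [← h]
      abel
    have h0 := hval 0
    have h1 := hval (ω * (o:ℝ) * π)
    rw [hD0] at h0
    rw [hD1] at h1
    have hg0 : g 0 = 0 := by
      have hsub : (g 0 • q + (g 1 • e2v 0 + g 2 • e2v 1))
          - (g 0 • (-q) + (g 1 • e2v 0 + g 2 • e2v 1)) = 0 := by rw [h0, h1]; simp
      have h2 : (2 * g 0) • q = 0 := by
        rw [← hsub]; module
      rcases smul_eq_zero.1 h2 with h | h
      · linarith [h]
      · exact absurd h hq
    rw [hg0, zero_smul, zero_add] at h0
    have hg1 : g 1 = 0 := by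
      have := congrArg (fun x : R2 => x 0) h0
      simpa [e2v, EuclideanSpace.single_apply, PiLp.add_apply, PiLp.smul_apply] using this
    have hg2 : g 2 = 0 := by
      have := congrArg (fun x : R2 => x 1) h0
      simpa [e2v, EuclideanSpace.single_apply, PiLp.add_apply, PiLp.smul_apply] using this
    intro i
    fin_cases i <;> assumption
  haveI : FiniteDimensional ℝ (span ℝ (Set.range W)) :=
    FiniteDimensional.span_of_finite ℝ (Set.finite_range W)
  have hle : span ℝ (Set.range T) ≤ span ℝ (Set.range W) := by
    rw [Submodule.span_le]
    rintro x ⟨p, rfl⟩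
    exact hWspan _ (hTsol p)
  have hspan_eq : span ℝ (Set.range T) = span ℝ (Set.range W) := by
    apply Submodule.eq_of_le_of_finrank_le hle
    rw [finrank_span_eq_card hWli, finrank_span_eq_card hTli]
  have hu' : u ∈ span ℝ (Set.range T) := by
    rw [hspan_eq]
    exact hWspan u hu
  obtain ⟨g, hg⟩ := (mem_span_range_iff_exists_fun ℝ).1 hu'
  refine ⟨g 0, g 1 • e2v 0 + g 2 • e2v 1, ?_⟩
  intro t j
  have h := congrFun (congrFun hg t) j
  simp only [Fin.sum_univ_three, hT, Matrix.cons_val_zero, Matrix.cons_val_one,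
    Matrix.head_cons, Matrix.cons_val_two, Matrix.tail_cons] at h
  simp only [Pi.add_apply, Pi.smul_apply] at h
  rw [← h]
  simp only [hD]
  abel

include ho hω hz0 hZeq in
lemma deriv_Z_vals (js : Fin n) :
    deriv (fun s => Z s js) 0 = (ω/(o:ℝ)) • Jrot (z0 js) ∧
    deriv (fun s => Z s js) (ω * (o:ℝ) * π) = -((ω/(o:ℝ)) • Jrot (z0 js)) := by
  have hval : ∀ t, deriv (fun s => Z s js) t = (ω/(o:ℝ)) • Jrot (Z t js) := by
    intro t
    rw [deriv_Z_eq o ω z0 Z hZeq]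
    rfl
  have hZ0 : Z 0 js = z0 js := by
    rw [hZeq]
    norm_num [rotate_zero]
  have hZt1 : Z (ω * (o:ℝ) * π) js = -(z0 js) := by
    have ho' : (o:ℝ) ≠ 0 := Nat.cast_ne_zero.2 ho.ne'
    rw [hZeq]
    have harg : ω * (ω * (o:ℝ) * π) / (o:ℝ) = π := by
      rcases hω with h | h <;> rw [h] <;> field_simp
    rw [harg, rotate_pi]
  have hJneg : Jrot (-(z0 js)) = -(Jrot (z0 js)) := by
    have h := Jrot_smul (-1) (z0 js)
    simpa using h
  constructor
  · rw [hval, hZ0]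
  · rw [hval, hZt1, hJneg, smul_neg]

end Block

/-- the space of `σ`-symmetric `τ`-periodic solutions of the decoupled
linearized system is exactly `span{Ż¹,…,Żˡ} ⊕ {â : a ∈ ℝ^{2m}}` (dimension `l+2m`). -/
theorem statement8
    (m l : ℕ) (hl : 1 ≤ l) (hlm : l ≤ m)
    (Nk : Fin m → ℕ)
    (hNkhead : ∀ k : Fin m, (k : ℕ) < l → 2 ≤ Nk k)
    (hNktail : ∀ k : Fin m, l ≤ (k : ℕ) → Nk k = 1)
    (Γc : (k : Fin m) → Fin (Nk k) → ℝ) (hΓc : ∀ k j, Γc k j ≠ 0)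
    (σ : (k : Fin m) → Equiv.Perm (Fin (Nk k)))
    (hσΓ : ∀ (k : Fin m) (j : Fin (Nk k)), Γc k j = Γc k ((σ k)⁻¹ j))
    (hσtail : ∀ k : Fin m, l ≤ (k : ℕ) → σ k = 1)
    (Z : (k : Fin m) → ℝ → Fin (Nk k) → R2)
    (hZrel : ∀ k : Fin m, (k : ℕ) < l →
      IsRelEq (Γc k) (orderOf (σ k)) (Z k) ∧ SigmaNondeg (Γc k) (σ k) (Z k))
    (hZtail : ∀ k : Fin m, l ≤ (k : ℕ) → Z k = 0)
    -- the solution set `S`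
    (S : Set (ℝ → ((k : Fin m) × Fin (Nk k)) → R2))
    (hS : ∀ w, w ∈ S ↔
      ((∀ (t : ℝ) (i : (k : Fin m) × Fin (Nk k)),
          HasDerivAt (fun s => Γc i.1 i.2 • w s i)
            (Jrot (hessVec (planeHam (Γc i.1)) (Z i.1 t) (fun j => w t ⟨i.1, j⟩) i.2)) t) ∧
        (∀ (t : ℝ) (i : (k : Fin m) × Fin (Nk k)),
          w (t + 2 * π) ⟨i.1, (σ i.1)⁻¹ i.2⟩ = w t i) ∧
        (∀ t, w (t + 2 * π * (orderOf σ : ℝ)) = w t))) :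
    (∀ w, w ∈ S ↔
      ∃ (c : Fin m → ℝ) (a : Fin m → R2),
        (∀ k : Fin m, l ≤ (k : ℕ) → c k = 0) ∧
        w = fun t i => c i.1 • deriv (fun s => Z i.1 s i.2) t + a i.1) ∧
    (∀ (c c' : Fin m → ℝ) (a a' : Fin m → R2),
      (∀ k : Fin m, l ≤ (k : ℕ) → c k = 0) → (∀ k : Fin m, l ≤ (k : ℕ) → c' k = 0) →
      (fun (t : ℝ) (i : (k : Fin m) × Fin (Nk k)) =>
          c i.1 • deriv (fun s => Z i.1 s i.2) t + a i.1)
        = (fun (t : ℝ) (i : (k : Fin m) × Fin (Nk k)) =>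
          c' i.1 • deriv (fun s => Z i.1 s i.2) t + a' i.1) →
      c = c' ∧ a = a') := by
  classical
  have horder : ∀ k : Fin m, (k:ℕ) < l → (σ k) ^ (orderOf σ) = 1 := by
    intro k _
    calc (σ k) ^ (orderOf σ) = (σ ^ (orderOf σ)) k := (Pi.pow_apply σ _ k).symm
    _ = (1 : (k : Fin m) → Equiv.Perm (Fin (Nk k))) k := by rw [pow_orderOf_eq_one]
    _ = 1 := rfl
  constructor
  · intro w
    constructor
    · -- w ∈ S → representation
      intro hw
      rw [hS] at hw
      obtain ⟨hw1, hw2, hw3⟩ := hw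
      have key : ∀ k : Fin m, ∃ (ck : ℝ) (ak : R2), (l ≤ (k:ℕ) → ck = 0) ∧
          ∀ t j, w t ⟨k, j⟩ = ck • deriv (fun s => Z k s j) t + ak := by
        intro k
        by_cases hk : (k:ℕ) < l
        · obtain ⟨hrel, hnd⟩ := hZrel k hk
          obtain ⟨⟨ω, hω, z0, hz0, hZeq⟩, hsol⟩ := hrel
          obtain ⟨hshift, W, hWli, hWsol, hWspan⟩ := hnd
          have hn : 2 ≤ Nk k := hNkhead k hk
          have hu : IsLinSol (Γc k) (σ k) (Z k) (fun t j => w t ⟨k, j⟩) :=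
            ⟨fun t j => hw1 t ⟨k, j⟩, fun t j => hw2 t ⟨k, j⟩⟩
          obtain ⟨ck, ak, hval⟩ := block_backward (Γc k) (σ k) (orderOf (σ k)) ω z0 (Z k)
            (orderOf_pos _) hω hz0 hZeq hsol hshift hn W hWli hWspan _ hu
          exact ⟨ck, ak, fun hge => absurd hk (by omega), hval⟩
        · push_neg at hk
          have h1 : Nk k = 1 := hNktail k hk
          haveI hss : Subsingleton (Fin (Nk k)) := by rw [h1]; infer_instance
          haveI hne : Nonempty (Fin (Nk k)) := by rw [h1]; infer_instance
          set j0 : Fin (Nk k) := Classical.arbitrary _ with hj0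
          have hconst : ∀ (j : Fin (Nk k)) (t : ℝ), w t ⟨k, j⟩ = w 0 ⟨k, j⟩ := by
            intro j t
            have hder : ∀ s, HasDerivAt (fun u => Γc k j • w u ⟨k, j⟩) 0 s := by
              intro s
              have h := hw1 s ⟨k, j⟩
              rwa [hessVec_planeHam_subsingleton, Jrot_zero] at h
            have hdiff : Differentiable ℝ (fun u => Γc k j • w u ⟨k, j⟩) :=
              fun s => (hder s).differentiableAt
            have hd0 : ∀ s, deriv (fun u => Γc k j • w u ⟨k, j⟩) s = 0 :=
              fun s => (hder s).deriv
            have hc := is_const_of_deriv_eq_zero hdiff hd0 t 0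
            have hΓk := hΓc k j
            calc w t ⟨k,j⟩ = (Γc k j)⁻¹ • (Γc k j • w t ⟨k,j⟩) := by
                  rw [smul_smul, inv_mul_cancel₀ hΓk, one_smul]
            _ = (Γc k j)⁻¹ • (Γc k j • w 0 ⟨k,j⟩) := by rw [hc]
            _ = w 0 ⟨k,j⟩ := by rw [smul_smul, inv_mul_cancel₀ hΓk, one_smul]
          refine ⟨0, w 0 ⟨k, j0⟩, fun _ => rfl, ?_⟩
          intro t j
          have hj : j = j0 := Subsingleton.elim _ _
          rw [hj, hconst j0 t]
          simp
      choose cfn afn hc0 hval using key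
      refine ⟨cfn, afn, hc0, ?_⟩
      funext t i
      cases i with
      | mk k j => exact hval k t j
    · -- representation → w ∈ S
      rintro ⟨c, a, hc0, rfl⟩
      rw [hS]
      refine ⟨?_, ?_, ?_⟩
      · intro t i
        rcases i with ⟨k, j⟩
        beta_reduce
        by_cases hk : (k:ℕ) < l
        · obtain ⟨hrel, hnd⟩ := hZrel k hk
          obtain ⟨⟨ω, hω, z0, hz0, hZeq⟩, hsol⟩ := hrel
          exact (block_linsol (Γc k) (σ k) (orderOf (σ k)) ω z0 (Z k)
            (orderOf_pos _) hω hz0 hZeq hsol hnd.1 (c k) (a k)).1 t j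
        · push_neg at hk
          have h1 : Nk k = 1 := hNktail k hk
          haveI hss : Subsingleton (Fin (Nk k)) := by rw [h1]; infer_instance
          simp only [hc0 k hk, zero_smul, zero_add]
          rw [hessVec_planeHam_subsingleton, Jrot_zero]
          exact hasDerivAt_const t _
      · intro t i
        rcases i with ⟨k, j⟩
        beta_reduce
        by_cases hk : (k:ℕ) < l
        · obtain ⟨hrel, hnd⟩ := hZrel k hk
          obtain ⟨⟨ω, hω, z0, hz0, hZeq⟩, hsol⟩ := hrel
          exact (block_linsol (Γc k) (σ k) (orderOf (σ k)) ω z0 (Z k)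
            (orderOf_pos _) hω hz0 hZeq hsol hnd.1 (c k) (a k)).2 t j
        · push_neg at hk
          simp only [hc0 k hk, zero_smul, zero_add]
      · intro t
        funext i
        rcases i with ⟨k, j⟩
        beta_reduce
        by_cases hk : (k:ℕ) < l
        · obtain ⟨hrel, hnd⟩ := hZrel k hk
          have hper := deriv_Z_periodic (σ k) (Z k) hnd.1 (orderOf σ) (horder k hk) t j
          rw [hper]
        · push_neg at hk
          simp only [hc0 k hk, zero_smul, zero_add]
  · -- uniqueness of the representation
    intro c c' a a' hc hc' heq
    have key : ∀ k : Fin m, c k = c' k ∧ a k = a' k := by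
      intro k
      by_cases hk : (k:ℕ) < l
      · obtain ⟨hrel, hnd⟩ := hZrel k hk
        obtain ⟨⟨ω, hω, z0, hz0, hZeq⟩, hsol⟩ := hrel
        have hn : 2 ≤ Nk k := hNkhead k hk
        obtain ⟨js, hjs⟩ := exists_z0_ne_zero hn z0 hz0
        obtain ⟨hv0, hv1⟩ := deriv_Z_vals (orderOf (σ k)) ω z0 (Z k)
          (orderOf_pos _) hω hz0 hZeq js
        have ho' : ((orderOf (σ k) : ℕ):ℝ) ≠ 0 := Nat.cast_ne_zero.2 (orderOf_pos (σ k)).ne'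
        have hω0 : ω ≠ 0 := by rcases hω with h | h <;> rw [h] <;> norm_num
        set q : R2 := (ω/((orderOf (σ k) : ℕ):ℝ)) • Jrot (z0 js) with hqdef
        have hq : q ≠ 0 := by
          apply smul_ne_zero (div_ne_zero hω0 ho')
          intro h
          exact hjs (Jrot_eq_zero_iff.1 h)
        have e0 := congrFun (congrFun heq 0) ⟨k, js⟩
        have e1 := congrFun (congrFun heq (ω * ((orderOf (σ k) : ℕ):ℝ) * π)) ⟨k, js⟩
        simp only at e0 e1
        rw [hv0] at e0
        rw [hv1] at e1
        have hcc : c k = c' k := by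
          have hsub : ((c k - c' k) * 2) • q = 0 := by
            have h2 : (c k • q + a k) - (c k • -q + a k)
                = (c' k • q + a' k) - (c' k • -q + a' k) := by rw [e0, e1]
            have h3 : (2 * c k) • q = (2 * c' k) • q := by
              have hl : (c k • q + a k) - (c k • -q + a k) = (2 * c k) • q := by module
              have hr : (c' k • q + a' k) - (c' k • -q + a' k) = (2 * c' k) • q := by module
              rw [← hl, ← hr, h2]
            have : (2 * c k) • q - (2 * c' k) • q = 0 := by rw [h3]; simp
            rw [← this]; module
          rcases smul_eq_zero.1 hsub with h | h
          · have : c k - c' k = 0 := by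
              rcases mul_eq_zero.1 h with h' | h'
              · exact h'
              · norm_num at h'
            linarith [this]
          · exact absurd h hq
        refine ⟨hcc, ?_⟩
        have := e0
        rw [hcc] at this
        exact add_left_cancel this
      · push_neg at hk
        have h1 : Nk k = 1 := hNktail k hk
        haveI hne : Nonempty (Fin (Nk k)) := by rw [h1]; infer_instance
        set j0 : Fin (Nk k) := Classical.arbitrary _
        have e0 := congrFun (congrFun heq 0) ⟨k, j0⟩
        simp only [hc k hk, hc' k hk, zero_smul, zero_add] at e0
        exact ⟨(hc k hk).trans (hc' k hk).symm, e0⟩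
    exact ⟨funext fun k => (key k).1, funext fun k => (key k).2⟩
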